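/- arXiv:2105.13872 — 2 statements merged into one kernel-verified Lean document; each statement's English description precedes it below -/
import Mathlib

section
/- Let f : U → ℝ^n be a C^l curve on an open interval U ⊆ ℝ (with l ≥ n) that is l-nondegenerate at x₀ ∈ U, meaning the derivatives f'(x₀), f''(x₀), …, f^{(l)}(x₀) span ℝ^n. Then there exists an open interval B₀ ⊆ U centered at x₀ and a countable set S ⊆ B₀ such that for every x ∈ B₀ \ S the derivatives f'(x), …, f^{(n)}(x) span ℝ^n (i.e., f is n-nondegenerate at every point of B₀ \ S). -/
open Set Submodule Module Topology Filter Matrix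

private lemma countable_of_isolated' {s : Set ℝ} (h : ∀ x ∈ s, {x} ∈ 𝓝[s] x) :
    s.Countable := by
  obtain ⟨t, hts, htc, hcov⟩ :=
    TopologicalSpace.countable_cover_nhdsWithin (f := fun x => ({x} : Set ℝ)) h
  refine htc.mono fun x hx => ?_
  have := hcov hx
  simp only [Set.mem_iUnion, Set.mem_singleton_iff, exists_prop] at this
  obtain ⟨y, hy, rfl⟩ := this
  exact hy

private lemma eventually_ne_of_hasDerivAt {ψ : ℝ → ℝ} {x d : ℝ} (h : HasDerivAt ψ d x)
    (h0 : ψ x = 0) (hd : d ≠ 0) : ∀ᶠ y in 𝓝[≠] x, ψ y ≠ 0 := by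
  have hs := hasDerivAt_iff_tendsto_slope.1 h
  have hne : ∀ᶠ y in 𝓝[≠] x, slope ψ x y ≠ 0 := hs.eventually_ne hd
  filter_upwards [hne, self_mem_nhdsWithin] with y hy hyx
  intro hψ
  apply hy
  have : (y : ℝ) ≠ x := hyx
  simp [slope_def_field, hψ, h0]

private lemma det_eq_zero_of_rows_mem {m : ℕ} {M : Matrix (Fin m) (Fin m) ℝ}
    {U : Submodule ℝ (Fin m → ℝ)} (hU : finrank ℝ U < m) (h : ∀ r, M r ∈ U) :
    M.det = 0 := by
  classical
  have hdep : ¬ LinearIndependent ℝ (fun r : Fin m => M r) := by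
    intro hli
    have h2 : LinearIndependent ℝ (fun r : Fin m => (⟨M r, h r⟩ : U)) :=
      LinearIndependent.of_comp U.subtype (by exact hli)
    have := h2.fintype_card_le_finrank
    simp only [Fintype.card_fin] at this
    omega
  obtain ⟨g, hg0, i, hgi⟩ := Fintype.not_linearIndependent_iff.1 hdep
  have hv : g ᵥ* M = 0 := by
    ext j
    have := congrFun hg0 j
    simpa [Matrix.vecMul, dotProduct, Finset.sum_apply] using this
  exact Matrix.exists_vecMul_eq_zero_iff.1 ⟨g, fun hh => hgi (congrFun hh i), hv⟩

private lemma rows_li_of_det_ne_zero {m : ℕ} {M : Matrix (Fin m) (Fin m) ℝ}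
    (h : M.det ≠ 0) : LinearIndependent ℝ (fun r : Fin m => M r) := by
  classical
  by_contra hdep
  obtain ⟨g, hg0, i, hgi⟩ := Fintype.not_linearIndependent_iff.1 hdep
  have hv : g ᵥ* M = 0 := by
    ext j
    have := congrFun hg0 j
    simpa [Matrix.vecMul, dotProduct, Finset.sum_apply] using this
  exact h (Matrix.exists_vecMul_eq_zero_iff.1 ⟨g, fun hh => hgi (congrFun hh i), hv⟩)

private lemma det_ne_zero_of_rows_li {m : ℕ} {M : Matrix (Fin m) (Fin m) ℝ}
    (h : LinearIndependent ℝ (fun r : Fin m => M r)) : M.det ≠ 0 := by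
  classical
  intro hdet
  obtain ⟨g, hg, hv⟩ := Matrix.exists_vecMul_eq_zero_iff.2 hdet
  have : ∀ r, g r = 0 := by
    apply Fintype.linearIndependent_iff.1 h
    ext j
    have := congrFun hv j
    simpa [Matrix.vecMul, dotProduct, Finset.sum_apply] using this
  exact hg (funext this)

private lemma hasDerivAt_det' {m : ℕ} {A : ℝ → Matrix (Fin m) (Fin m) ℝ}
    {A' : Matrix (Fin m) (Fin m) ℝ} {x : ℝ}
    (h : ∀ i j, HasDerivAt (fun y => A y i j) (A' i j) x) :
    HasDerivAt (fun y => (A y).det)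
      (∑ r : Fin m, ((A x).updateRow r (A' r)).det) x := by
  classical
  have hdet : ∀ M : Matrix (Fin m) (Fin m) ℝ,
      M.det = ∑ σ : Equiv.Perm (Fin m),
        ((Equiv.Perm.sign σ : ℤ) : ℝ) * ∏ i, M (σ i) i := by
    intro M
    rw [Matrix.det_apply]
    refine Finset.sum_congr rfl fun σ _ => ?_
    rw [Units.smul_def, zsmul_eq_mul]
  have hσ : ∀ σ : Equiv.Perm (Fin m),
      HasDerivAt (fun y => ∏ i : Fin m, A y (σ i) i)
        (∑ i : Fin m, (∏ j ∈ Finset.univ.erase i, A x (σ j) j) • A' (σ i) i) x :=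
    fun σ => HasDerivAt.fun_finsetProd (fun i _ => h (σ i) i)
  have H : HasDerivAt
      (fun y => ∑ σ : Equiv.Perm (Fin m),
        ((Equiv.Perm.sign σ : ℤ) : ℝ) * ∏ i, A y (σ i) i)
      (∑ σ : Equiv.Perm (Fin m), ((Equiv.Perm.sign σ : ℤ) : ℝ) *
        ∑ i : Fin m, (∏ j ∈ Finset.univ.erase i, A x (σ j) j) • A' (σ i) i) x :=
    HasDerivAt.fun_sum fun σ _ => (hσ σ).const_mul _
  have hfun : (fun y => (A y).det) =
      (fun y => ∑ σ : Equiv.Perm (Fin m),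
        ((Equiv.Perm.sign σ : ℤ) : ℝ) * ∏ i, A y (σ i) i) :=
    funext fun y => hdet (A y)
  rw [hfun]
  convert H using 1
  -- equality of the derivative values
  have key : ∀ σ : Equiv.Perm (Fin m), ∀ r : Fin m,
      (∏ i : Fin m, ((A x).updateRow r (A' r)) (σ i) i)
        = (∏ j ∈ Finset.univ.erase (σ.symm r), A x (σ j) j) • A' (σ (σ.symm r)) (σ.symm r) := by
    intro σ r
    rw [← Finset.mul_prod_erase Finset.univ _ (Finset.mem_univ (σ.symm r))]
    rw [smul_eq_mul, mul_comm]
    have h1 : ((A x).updateRow r (A' r)) (σ (σ.symm r)) (σ.symm r)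
        = A' (σ (σ.symm r)) (σ.symm r) := by
      rw [Equiv.apply_symm_apply, Matrix.updateRow_self]
    have h2 : (∏ j ∈ Finset.univ.erase (σ.symm r), ((A x).updateRow r (A' r)) (σ j) j)
        = ∏ j ∈ Finset.univ.erase (σ.symm r), A x (σ j) j := by
      refine Finset.prod_congr rfl fun j hj => ?_
      have hjne : σ j ≠ r := by
        intro hc
        have : j = σ.symm r := by
          rw [← hc, Equiv.symm_apply_apply]
        simp [this] at hj
      rw [Matrix.updateRow_ne hjne]
    rw [h1, h2]
  calc ∑ r : Fin m, ((A x).updateRow r (A' r)).det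
      = ∑ r : Fin m, ∑ σ : Equiv.Perm (Fin m),
          ((Equiv.Perm.sign σ : ℤ) : ℝ) * ∏ i, ((A x).updateRow r (A' r)) (σ i) i := by
        refine Finset.sum_congr rfl fun r _ => hdet _
    _ = ∑ σ : Equiv.Perm (Fin m), ∑ r : Fin m,
          ((Equiv.Perm.sign σ : ℤ) : ℝ) * ∏ i, ((A x).updateRow r (A' r)) (σ i) i :=
        Finset.sum_comm
    _ = ∑ σ : Equiv.Perm (Fin m), ((Equiv.Perm.sign σ : ℤ) : ℝ) *
          ∑ i : Fin m, (∏ j ∈ Finset.univ.erase i, A x (σ j) j) • A' (σ i) i := by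
        refine Finset.sum_congr rfl fun σ _ => ?_
        rw [Finset.mul_sum]
        rw [← Equiv.sum_comp σ.symm (fun i => ((Equiv.Perm.sign σ : ℤ) : ℝ) *
          ((∏ j ∈ Finset.univ.erase i, A x (σ j) j) • A' (σ i) i))]
        refine Finset.sum_congr rfl fun r _ => ?_
        rw [key σ r]

private lemma exists_selection {ι : Type*} [Fintype ι] {m : ℕ} {v : ι → (Fin m → ℝ)}
    (hspan : Submodule.span ℝ (Set.range v) = ⊤) :
    ∃ c : Fin m → ι, LinearIndependent ℝ (fun r => v (c r)) := by
  classical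
  obtain ⟨b, hbsub, hbspan, hbli⟩ := exists_linearIndependent ℝ (Set.range v)
  rw [hspan] at hbspan
  have hbfin : b.Finite := Set.Finite.subset (Set.finite_range v) hbsub
  haveI := hbfin.fintype
  have hcard : Fintype.card b = m := by
    have h1 := finrank_span_set_eq_card hbli
    rw [hbspan] at h1
    rw [finrank_top, Module.finrank_pi, Fintype.card_fin] at h1
    exact (Set.toFinset_card b).symm.trans h1.symm
  have e : Fin m ≃ b := (Fintype.equivFinOfCardEq hcard).symm
  have hch : ∀ r : Fin m, ∃ i : ι, v i = (e r : Fin m → ℝ) := fun r => hbsub (e r).2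
  choose c hc using hch
  refine ⟨c, ?_⟩
  have : (fun r => v (c r)) = (fun r : Fin m => ((e r : b) : Fin m → ℝ)) := funext hc
  rw [this]
  exact hbli.comp (fun r => e r) (fun r r' h => e.injective h)

private lemma exists_cols {i m : ℕ} {w : Fin i → (Fin m → ℝ)}
    (hw : LinearIndependent ℝ w) :
    ∃ c : Fin i → Fin m, (Matrix.of fun r j => w r (c j)).det ≠ 0 := by
  classical
  have hrank : (Matrix.of w).rank = i := by
    have := LinearIndependent.rank_matrix (M := Matrix.of w) hw
    simpa using this
  have hspan : Submodule.span ℝ (Set.range (Matrix.of w)ᵀ) = ⊤ := by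
    apply Submodule.eq_top_of_finrank_eq
    rw [show Set.range (Matrix.of w)ᵀ = Set.range (Matrix.of w).col from rfl,
      ← Matrix.rank_eq_finrank_span_cols, hrank, Module.finrank_pi]
    simp
  obtain ⟨c, hc⟩ := exists_selection hspan
  refine ⟨c, ?_⟩
  have heq : (Matrix.of fun r j => w r (c j)) = (Matrix.of fun r j => (Matrix.of w)ᵀ (c r) j)ᵀ := by
    ext r j
    rfl
  rw [heq, Matrix.det_transpose]
  exact det_ne_zero_of_rows_li (by exact hc)

theorem nondegenerate_off_countable_set (n l : ℕ) (hn : 1 ≤ n) (hl : n ≤ l)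
    (a b x₀ : ℝ) (hx₀ : x₀ ∈ Set.Ioo a b) (f : ℝ → (Fin n → ℝ))
    (hf : ContDiffOn ℝ l f (Set.Ioo a b))
    (hnd : Submodule.span ℝ (Set.range fun i : Fin l =>
      iteratedDerivWithin ((i : ℕ) + 1) f (Set.Ioo a b) x₀) = ⊤) :
    ∃ ε > 0, Set.Ioo (x₀ - ε) (x₀ + ε) ⊆ Set.Ioo a b ∧
      ∃ S : Set ℝ, S.Countable ∧
        ∀ x ∈ Set.Ioo (x₀ - ε) (x₀ + ε) \ S,
          Submodule.span ℝ (Set.range fun i : Fin n =>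
            iteratedDerivWithin ((i : ℕ) + 1) f (Set.Ioo a b) x) = ⊤ := by
  classical
  set s : Set ℝ := Set.Ioo a b with hs_def
  have hso : IsOpen s := isOpen_Ioo
  have hsu : UniqueDiffOn ℝ s := hso.uniqueDiffOn
  set D : ℕ → ℝ → Fin n → ℝ := fun k => iteratedDerivWithin k f s with hD_def
  -- basic facts about D
  have hDderiv : ∀ k : ℕ, k < l → ∀ x ∈ s, HasDerivAt (D k) (D (k + 1) x) x := by
    intro k hk x hx
    have hdiff : DifferentiableOn ℝ (D k) s :=
      hf.differentiableOn_iteratedDerivWithin (by exact_mod_cast hk) hsu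
    have h1 : DifferentiableAt ℝ (D k) x :=
      (hdiff x hx).differentiableAt (hso.mem_nhds hx)
    have h2 : D (k + 1) x = deriv (D k) x := by
      rw [hD_def]
      simp only
      rw [iteratedDerivWithin_succ]
      exact derivWithin_of_isOpen hso hx
    rw [h2]
    exact h1.hasDerivAt
  have hDcomp : ∀ (k : ℕ), k < l → ∀ x ∈ s, ∀ j : Fin n,
      HasDerivAt (fun y => D k y j) (D (k + 1) x j) x := by
    intro k hk x hx j
    exact (ContinuousLinearMap.proj (R := ℝ) (φ := fun _ : Fin n => ℝ) j).hasFDerivAt.comp_hasDerivAt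
      x (hDderiv k hk x hx)
  -- the submodules
  set V : ℕ → ℝ → Submodule ℝ (Fin n → ℝ) :=
    fun m x => Submodule.span ℝ (Set.range fun j : Fin m => D ((j : ℕ) + 1) x) with hV_def
  have hVmem : ∀ k m : ℕ, ∀ x : ℝ, 1 ≤ k → k ≤ m → D k x ∈ V m x := by
    intro k m x h1 h2
    apply Submodule.subset_span
    have hkk : k - 1 + 1 = k := by omega
    exact ⟨⟨k - 1, by omega⟩, show D (k - 1 + 1) x = D k x from by rw [hkk]⟩
  have hVrank : ∀ m : ℕ, ∀ x : ℝ, finrank ℝ (V m x) ≤ m := by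
    intro m x
    have := finrank_range_le_card (R := ℝ) (fun j : Fin m => D ((j : ℕ) + 1) x)
    simpa [Set.finrank] using this
  have hVmono : ∀ m m' : ℕ, m ≤ m' → ∀ x, V m x ≤ V m' x := by
    intro m m' h x
    apply Submodule.span_mono
    rintro _ ⟨j, rfl⟩
    exact ⟨⟨(j : ℕ), by omega⟩, rfl⟩
  -- choice of ε
  obtain ⟨κ, hκ⟩ := exists_selection (v := fun i : Fin l => D ((i : ℕ) + 1) x₀) (by exact hnd)
  set W : ℝ → ℝ := fun x => (Matrix.of fun r j : Fin n => D ((κ r : ℕ) + 1) x j).det with hW_def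
  have hWx₀ : W x₀ ≠ 0 := det_ne_zero_of_rows_li (by exact hκ)
  have hWcont : ContinuousAt W x₀ := by
    have hdetc : Continuous fun M : Matrix (Fin n) (Fin n) ℝ => M.det :=
      Continuous.matrix_det continuous_id
    have hA : ContinuousOn (fun x => (Matrix.of fun r j : Fin n => D ((κ r : ℕ) + 1) x j)) s := by
      apply continuousOn_pi.2
      intro r
      apply continuousOn_pi.2
      intro j
      have hcd : ContinuousOn (D ((κ r : ℕ) + 1)) s :=
        hf.continuousOn_iteratedDerivWithin
          (by exact_mod_cast (by have := (κ r).2; omega : (κ r : ℕ) + 1 ≤ l)) hsu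
      exact (continuous_apply j).comp_continuousOn hcd
    have hcont : ContinuousOn W s := hdetc.comp_continuousOn hA
    exact hcont.continuousAt (hso.mem_nhds hx₀)
  have hne : ∀ᶠ y in 𝓝 x₀, W y ≠ 0 := hWcont.eventually_ne hWx₀
  obtain ⟨ε, hε, hball⟩ : ∃ ε > 0, Set.Ioo (x₀ - ε) (x₀ + ε) ⊆ {y | W y ≠ 0} ∩ s := by
    have hmm : {y | W y ≠ 0} ∩ s ∈ 𝓝 x₀ := Filter.inter_mem hne (hso.mem_nhds hx₀)
    obtain ⟨ε, hε, h⟩ := Metric.mem_nhds_iff.1 hmm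
    exact ⟨ε, hε, by rw [← Real.ball_eq_Ioo]; exact h⟩
  set B₀ : Set ℝ := Set.Ioo (x₀ - ε) (x₀ + ε) with hB₀_def
  have hB₀s : B₀ ⊆ s := fun y hy => (hball hy).2
  have htop : ∀ x ∈ B₀, V l x = ⊤ := by
    intro x hx
    have hli : LinearIndependent ℝ (fun r : Fin n => D ((κ r : ℕ) + 1) x) :=
      rows_li_of_det_ne_zero (hball hx).1
    have h1 : Submodule.span ℝ (Set.range fun r : Fin n => D ((κ r : ℕ) + 1) x) = ⊤ := by
      apply Submodule.eq_top_of_finrank_eq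
      rw [finrank_span_eq_card hli]
      simp [Module.finrank_pi]
    rw [eq_top_iff, ← h1]
    apply Submodule.span_le.2
    rintro _ ⟨r, rfl⟩
    exact hVmem _ l x (by omega) (by have := (κ r).2; omega)
  -- the strata
  set T : ℕ → ℕ → Set ℝ := fun p g =>
    {x | x ∈ B₀ ∧ p + 1 ≤ n ∧ p + 2 ≤ g ∧ g ≤ l ∧ finrank ℝ (V (g - 1) x) ≤ p ∧
      LinearIndependent ℝ (fun r : Fin p => D ((r : ℕ) + 1) x) ∧ D g x ∉ V (g - 1) x}
    with hT_def
  -- each stratum is countable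
  have hTcount : ∀ p g : ℕ, (T p g).Countable := by
    intro p g
    apply countable_of_isolated'
    intro x hx
    obtain ⟨hxB, hpn, hpg, hgl, hfr, hli, hDg⟩ := hx
    have hxs : x ∈ s := hB₀s hxB
    -- row orders
    set ord : Fin (p + 1) → ℕ := fun r => if (r : ℕ) < p then (r : ℕ) + 1 else g - 1 with hord_def
    have hord_le : ∀ r, 1 ≤ ord r ∧ ord r ≤ g - 1 := by
      intro r
      by_cases h : (r : ℕ) < p <;> simp [hord_def, h] <;> omega
    have hord_lt : ∀ r, ord r < l := by
      intro r
      have := hord_le r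
      omega
    -- the target rows (after bumping the last one)
    set Wr : Fin (p + 1) → (Fin n → ℝ) :=
      fun r => if (r : ℕ) < p then D ((r : ℕ) + 1) x else D g x with hWr_def
    have hWr_snoc : Wr = Fin.snoc (fun r : Fin p => D ((r : ℕ) + 1) x) (D g x) := by
      funext r
      refine Fin.lastCases ?_ ?_ r
      · simp [hWr_def, Fin.snoc_last]
      · intro r'
        simp [hWr_def, Fin.snoc_castSucc, r'.2]
    have hWli : LinearIndependent ℝ Wr := by
      rw [hWr_snoc]
      apply linearIndependent_fin_snoc.2
      refine ⟨hli, ?_⟩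
      intro hmem
      exact hDg (hVmono p (g - 1) (by omega) x hmem)
    obtain ⟨c, hc⟩ := exists_cols hWli
    -- the function ψ
    set ψ : ℝ → ℝ := fun y => (Matrix.of fun r j => D (ord r) y (c j)).det with hψ_def
    -- ψ vanishes on the stratum
    have hvan : ∀ y ∈ T p g, ψ y = 0 := by
      intro y hy
      obtain ⟨hyB, -, -, -, hfry, -, -⟩ := hy
      apply det_eq_zero_of_rows_mem
        (U := (V (g - 1) y).map (LinearMap.funLeft ℝ ℝ c))
      · have h1 : finrank ℝ ((V (g - 1) y).map (LinearMap.funLeft ℝ ℝ c)) ≤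
            finrank ℝ (V (g - 1) y) := Submodule.finrank_map_le _ _
        omega
      · intro r
        have hmem : D (ord r) y ∈ V (g - 1) y :=
          hVmem _ _ y (hord_le r).1 (hord_le r).2
        exact Submodule.mem_map_of_mem hmem
    -- derivative of ψ at x
    have hder : HasDerivAt ψ
        (∑ r : Fin (p + 1), ((Matrix.of fun r j => D (ord r) x (c j)).updateRow r
          (fun j => D (ord r + 1) x (c j))).det) x := by
      apply hasDerivAt_det'
      intro r j
      exact hDcomp (ord r) (hord_lt r) x hxs (c j)
    -- all terms except the last vanish
    have hlast_val : ((Matrix.of fun r j => D (ord r) x (c j)).updateRow (Fin.last p)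
        (fun j => D (ord (Fin.last p) + 1) x (c j))).det
        = (Matrix.of fun r j => Wr r (c j)).det := by
      congr 1
      funext r j
      rcases eq_or_ne r (Fin.last p) with rfl | hr
      · rw [Matrix.updateRow_self]
        have : ¬ ((Fin.last p : Fin (p+1)) : ℕ) < p := by simp
        simp only [hWr_def, Matrix.of_apply, this, if_false]
        congr 2
        simp [hord_def]
        omega
      · rw [Matrix.updateRow_ne hr]
        have hrp : (r : ℕ) < p := by
          have := Fin.val_lt_last hr
          omega
        simp only [hWr_def, Matrix.of_apply, hord_def, hrp, if_true]
    have hzero : ∀ r : Fin (p + 1), r ≠ Fin.last p →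
        ((Matrix.of fun r j => D (ord r) x (c j)).updateRow r
          (fun j => D (ord r + 1) x (c j))).det = 0 := by
      intro r hr
      have hrp : (r : ℕ) < p := by
        have := Fin.val_lt_last hr
        omega
      apply det_eq_zero_of_rows_mem
        (U := (V (g - 1) x).map (LinearMap.funLeft ℝ ℝ c))
      · have h1 : finrank ℝ ((V (g - 1) x).map (LinearMap.funLeft ℝ ℝ c)) ≤
            finrank ℝ (V (g - 1) x) := Submodule.finrank_map_le _ _
        omega
      · intro r'
        rcases eq_or_ne r' r with rfl | hr'
        · rw [Matrix.updateRow_self]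
          have hmem : D (ord r' + 1) x ∈ V (g - 1) x := by
            apply hVmem _ _ x (by omega)
            have : ord r' = (r' : ℕ) + 1 := by simp [hord_def, hrp]
            omega
          exact Submodule.mem_map_of_mem hmem
        · rw [Matrix.updateRow_ne hr']
          exact Submodule.mem_map_of_mem (hVmem _ _ x (hord_le r').1 (hord_le r').2)
    have hsum : (∑ r : Fin (p + 1), ((Matrix.of fun r j => D (ord r) x (c j)).updateRow r
          (fun j => D (ord r + 1) x (c j))).det)
        = (Matrix.of fun r j => Wr r (c j)).det := by
      rw [Finset.sum_eq_single_of_mem (Fin.last p) (Finset.mem_univ _)]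
      · exact hlast_val
      · intro r _ hr
        exact hzero r hr
    rw [hsum] at hder
    -- isolation
    have hψx : ψ x = 0 := hvan x ⟨hxB, hpn, hpg, hgl, hfr, hli, hDg⟩
    have hev : ∀ᶠ y in 𝓝[≠] x, ψ y ≠ 0 :=
      eventually_ne_of_hasDerivAt hder hψx hc
    have hev' : ∀ᶠ y in 𝓝 x, y ≠ x → ψ y ≠ 0 := by
      rw [eventually_nhdsWithin_iff] at hev
      filter_upwards [hev] with y hy hyx
      exact hy hyx
    have hmem1 : {y | y ≠ x → ψ y ≠ 0} ∈ 𝓝[T p g] x :=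
      mem_nhdsWithin_of_mem_nhds hev'
    have hmem2 : T p g ∈ 𝓝[T p g] x := self_mem_nhdsWithin
    refine Filter.mem_of_superset (Filter.inter_mem hmem1 hmem2) ?_
    rintro y ⟨hy1, hy2⟩
    by_contra hyx
    exact hy1 (by simpa using hyx) (hvan y hy2)
  -- the exceptional set
  refine ⟨ε, hε, fun y hy => (hball hy).2, {x | x ∈ B₀ ∧ V n x ≠ ⊤}, ?_, ?_⟩
  · -- countability via coverage
    have hcover : {x | x ∈ B₀ ∧ V n x ≠ ⊤} ⊆ ⋃ p : ℕ, ⋃ g : ℕ, T p g := by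
      rintro x ⟨hxB, hxn⟩
      have hVl : V l x = ⊤ := htop x hxB
      have hfintop : finrank ℝ (⊤ : Submodule ℝ (Fin n → ℝ)) = n := by
        rw [finrank_top, Module.finrank_pi]
        simp
      have hPn : finrank ℝ (V n x) < n := by
        rcases lt_or_eq_of_le (hVrank n x) with h | h
        · exact h
        · exfalso
          exact hxn (Submodule.eq_top_of_finrank_eq (by rw [h, Module.finrank_pi]; simp))
      have hPex : ∃ j, finrank ℝ (V j x) < j := ⟨n, hPn⟩
      set i := Nat.find hPex with hi_def
      have hPi : finrank ℝ (V i x) < i := Nat.find_spec hPex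
      have hmin : ∀ j, j < i → ¬ finrank ℝ (V j x) < j := fun j hj => Nat.find_min hPex hj
      have hin : i ≤ n := Nat.find_le hPn
      have hi1 : 1 ≤ i := by
        rcases Nat.eq_zero_or_pos i with h | h
        · rw [h] at hPi; omega
        · exact h
      obtain ⟨p, hp⟩ : ∃ p, i = p + 1 := ⟨i - 1, by omega⟩
      have hrankp : finrank ℝ (V p x) = p := by
        have h1 := hVrank p x
        have h2 := hmin p (by omega)
        omega
      have hlip : LinearIndependent ℝ (fun r : Fin p => D ((r : ℕ) + 1) x) := by
        rw [linearIndependent_iff_card_eq_finrank_span]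
        rw [Fintype.card_fin]
        exact (show finrank ℝ (V p x) = p from hrankp).symm
      have hQex : ∃ k, p + 1 ≤ finrank ℝ (V k x) := by
        refine ⟨l, ?_⟩
        rw [hVl, hfintop]
        omega
      set g := Nat.find hQex with hg_def
      have hQg : p + 1 ≤ finrank ℝ (V g x) := Nat.find_spec hQex
      have hgmin : ∀ k, k < g → finrank ℝ (V k x) ≤ p := by
        intro k hk
        have := Nat.find_min hQex hk
        omega
      have hgl : g ≤ l := Nat.find_le (show p + 1 ≤ finrank ℝ (V l x) by
        rw [hVl, hfintop]; omega)
      have hgi : p + 2 ≤ g := by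
        by_contra hcon
        have h1 : g ≤ p + 1 := by omega
        have h2 : finrank ℝ (V g x) ≤ finrank ℝ (V (p + 1) x) :=
          Submodule.finrank_mono (hVmono _ _ h1 x)
        rw [← hp] at h2
        omega
      have hDg : D g x ∉ V (g - 1) x := by
        intro hmem'
        have hle : V g x ≤ V (g - 1) x := by
          apply Submodule.span_le.2
          rintro _ ⟨j, rfl⟩
          show D ((j : ℕ) + 1) x ∈ V (g - 1) x
          have hj : (j : ℕ) + 1 ≤ g := by have := j.2; omega
          rcases eq_or_lt_of_le hj with heq | hlt
          · rw [heq]; exact hmem'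
          · exact hVmem _ _ x (by omega) (by omega)
        have h2 : finrank ℝ (V g x) ≤ finrank ℝ (V (g - 1) x) :=
          Submodule.finrank_mono hle
        have h3 := hgmin (g - 1) (by omega)
        omega
      refine Set.mem_iUnion.2 ⟨p, Set.mem_iUnion.2 ⟨g, ?_⟩⟩
      exact ⟨hxB, by omega, hgi, hgl, hgmin (g - 1) (by omega), hlip, hDg⟩
    exact Set.Countable.mono hcover
      (Set.countable_iUnion fun p => Set.countable_iUnion fun g => hTcount p g)
  · rintro x ⟨hxB, hxS⟩
    have hVn : V n x = ⊤ := by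
      by_contra hne'
      exact hxS ⟨hxB, hne'⟩
    exact hVn
end

section
/- Let y ∈ ℝ^n, Θ ∈ ℝ^{m×d} with n = d + m, 0 < ε < 1, t > 0, φ = (ε^n e^t)^{1/(n+1)}, g_t = diag(φε^{-1},…,φε^{-1},φe^{-t}), U(y) the unipotent matrix [[I_n, σ_n^{-1}y^T],[0,1]], and Z(Θ) as above. Suppose (p, q) ∈ ℤ^n × ℤ with 0 < q < e^t and ‖y − p/q‖_∞ < ε/e^t. Then ‖g_t Z(Θ) U(y) (−pσ_n, q)^T‖ ≤ c₀ φ, where c₀ = √(n+1) · max_{1≤i≤m}(1 + |θ_{i,1}| + ⋯ + |θ_{i,d}|) and ‖·‖ is the Euclidean norm on ℝ^{n+1}. -/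
/-- The unipotent matrix `U(y)` with last column `(y_n, …, y_1, 1)ᵀ`. -/
def Umat (n : ℕ) (y : Fin n → ℝ) : Matrix (Fin (n + 1)) (Fin (n + 1)) ℝ :=
  fun i j =>
    if i = j then 1
    else if h : (j : ℕ) = n ∧ (i : ℕ) < n then y ⟨n - 1 - (i : ℕ), by omega⟩
    else 0

/-- The unipotent block matrix `Z(Θ) = [[I_m, σ_m⁻¹ Θ σ_d, 0], [0, I_d, 0], [0, 0, 1]]`. -/
def Zmat (d m : ℕ) (Θ : Matrix (Fin m) (Fin d) ℝ) :
    Matrix (Fin (d + m + 1)) (Fin (d + m + 1)) ℝ :=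
  fun i j =>
    if i = j then 1
    else if h : (i : ℕ) < m ∧ m ≤ (j : ℕ) ∧ (j : ℕ) < d + m then
      Θ ⟨m - 1 - (i : ℕ), by omega⟩ ⟨d - 1 - ((j : ℕ) - m), by omega⟩
    else 0

/-- `φ = (εⁿ eᵗ)^{1/(n+1)}`. -/
noncomputable def phiQ (n : ℕ) (ε t : ℝ) : ℝ :=
  (ε ^ n * Real.exp t) ^ ((1 : ℝ) / (n + 1))

/-- The diagonal matrix `g_t = diag(φε⁻¹, …, φε⁻¹, φe^{-t})`. -/
noncomputable def gmat (n : ℕ) (ε t : ℝ) : Matrix (Fin (n + 1)) (Fin (n + 1)) ℝ :=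
  Matrix.diagonal fun i =>
    if (i : ℕ) < n then phiQ n ε t / ε else phiQ n ε t * Real.exp (-t)

/-- The Euclidean norm on `Fin k → ℝ`. -/
noncomputable def euclNorm {k : ℕ} (v : Fin k → ℝ) : ℝ :=
  Real.sqrt (∑ i, v i ^ 2)

/-- The integer vector `(−pσ_n, q)ᵀ`: first `n` entries are `−p` in reversed order,
last entry is `q` (here `n = d + m`). -/
def pqVec (n : ℕ) (p : Fin n → ℤ) (q : ℤ) : Fin (n + 1) → ℝ :=
  fun k => if h : (k : ℕ) < n then -(p ⟨n - 1 - (k : ℕ), by omega⟩ : ℝ) else (q : ℝ)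

lemma Umat_mulVec_lt (n : ℕ) (y : Fin n → ℝ) (v : Fin (n+1) → ℝ) (i : Fin (n+1))
    (hi : (i : ℕ) < n) :
    (Umat n y).mulVec v i = v i + y ⟨n - 1 - (i : ℕ), by omega⟩ * v (Fin.last n) := by
  classical
  have key : ∀ j : Fin (n+1), Umat n y i j * v j =
      (if j = i then v i else 0) +
      (if j = Fin.last n then y ⟨n - 1 - (i : ℕ), by omega⟩ * v (Fin.last n) else 0) := by
    intro j
    unfold Umat
    by_cases hji : j = i
    · subst hji
      have hne : j ≠ Fin.last n := by
        intro hh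
        rw [hh, Fin.val_last] at hi
        exact lt_irrefl _ hi
      simp [hne]
    · rw [if_neg (fun hh => hji hh.symm), if_neg hji]
      by_cases hjl : j = Fin.last n
      · subst hjl
        rw [dif_pos ⟨Fin.val_last n, hi⟩, if_pos rfl, zero_add]
      · have hcond : ¬((j : ℕ) = n ∧ (i : ℕ) < n) := by
          intro hh
          exact hjl (Fin.ext hh.1)
        rw [dif_neg hcond, if_neg hjl, zero_mul, zero_add]
  have hil : i ≠ Fin.last n := by
    intro hh; rw [hh] at hi; rw [Fin.val_last] at hi; exact lt_irrefl _ hi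
  show (∑ j, Umat n y i j * v j) = _
  rw [Finset.sum_congr rfl (fun j _ => key j), Finset.sum_add_distrib,
    Finset.sum_ite_eq' Finset.univ i, Finset.sum_ite_eq' Finset.univ (Fin.last n)]
  simp

lemma Umat_mulVec_ge (n : ℕ) (y : Fin n → ℝ) (v : Fin (n+1) → ℝ) (i : Fin (n+1))
    (hi : ¬ (i : ℕ) < n) :
    (Umat n y).mulVec v i = v i := by
  classical
  have key : ∀ j : Fin (n+1), Umat n y i j * v j = if j = i then v i else 0 := by
    intro j
    unfold Umat
    by_cases hji : j = i
    · subst hji; simp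
    · rw [if_neg (fun hh => hji hh.symm), if_neg hji]
      rw [dif_neg (fun hh => hi hh.2), zero_mul]
  show (∑ j, Umat n y i j * v j) = _
  rw [Finset.sum_congr rfl (fun j _ => key j), Finset.sum_ite_eq' Finset.univ i]
  simp

lemma Zmat_mulVec_ge (d m : ℕ) (Θ : Matrix (Fin m) (Fin d) ℝ) (v : Fin (d+m+1) → ℝ)
    (i : Fin (d+m+1)) (hi : ¬ (i : ℕ) < m) :
    (Zmat d m Θ).mulVec v i = v i := by
  classical
  have key : ∀ j : Fin (d+m+1), Zmat d m Θ i j * v j = if j = i then v i else 0 := by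
    intro j
    unfold Zmat
    by_cases hji : j = i
    · subst hji; simp
    · rw [if_neg (fun hh => hji hh.symm), if_neg hji]
      rw [dif_neg (fun hh => hi hh.1), zero_mul]
  show (∑ j, Zmat d m Θ i j * v j) = _
  rw [Finset.sum_congr rfl (fun j _ => key j), Finset.sum_ite_eq' Finset.univ i]
  simp

lemma Zmat_mulVec_lt (d m : ℕ) (Θ : Matrix (Fin m) (Fin d) ℝ) (v : Fin (d+m+1) → ℝ)
    (i : Fin (d+m+1)) (hi : (i : ℕ) < m) :
    (Zmat d m Θ).mulVec v i = v i + ∑ j : Fin (d+m+1),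
      (if h : m ≤ (j : ℕ) ∧ (j : ℕ) < d + m then
        Θ ⟨m - 1 - (i : ℕ), by omega⟩ ⟨d - 1 - ((j : ℕ) - m), by omega⟩ * v j else 0) := by
  classical
  have key : ∀ j : Fin (d+m+1), Zmat d m Θ i j * v j =
      (if j = i then v i else 0) +
      (if h : m ≤ (j : ℕ) ∧ (j : ℕ) < d + m then
        Θ ⟨m - 1 - (i : ℕ), by omega⟩ ⟨d - 1 - ((j : ℕ) - m), by omega⟩ * v j else 0) := by
    intro j
    unfold Zmat
    by_cases hji : j = i
    · subst hji
      have hc : ¬ (m ≤ (j : ℕ) ∧ (j : ℕ) < d + m) := by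
        intro hh; omega
      simp [hc]
    · rw [if_neg (fun hh => hji hh.symm), if_neg hji]
      by_cases hc : m ≤ (j : ℕ) ∧ (j : ℕ) < d + m
      · rw [dif_pos ⟨hi, hc⟩, dif_pos hc, zero_add]
      · rw [dif_neg (fun hh => hc hh.2), dif_neg hc, zero_mul, zero_add]
  show (∑ j, Zmat d m Θ i j * v j) = _
  rw [Finset.sum_congr rfl (fun j _ => key j), Finset.sum_add_distrib,
    Finset.sum_ite_eq' Finset.univ i]
  simp

lemma sum_reindex (d m : ℕ) (f : Fin d → ℝ) :
    (∑ j : Fin (d+m+1), (if h : m ≤ (j : ℕ) ∧ (j : ℕ) < d + m then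
        f ⟨d - 1 - ((j : ℕ) - m), by omega⟩ else 0)) = ∑ k, f k := by
  classical
  set g : Fin (d+m+1) → ℝ := fun j => (if h : m ≤ (j : ℕ) ∧ (j : ℕ) < d + m then
        f ⟨d - 1 - ((j : ℕ) - m), by omega⟩ else 0) with hg
  set e : Fin d → Fin (d+m+1) := fun k => ⟨m + (d - 1 - (k : ℕ)), by omega⟩ with he
  have hek : ∀ k : Fin d, g (e k) = f k := by
    intro k
    have hc : m ≤ ((e k : Fin (d+m+1)) : ℕ) ∧ ((e k : Fin (d+m+1)) : ℕ) < d + m := by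
      have hk := k.isLt
      simp only [he]
      omega
    rw [hg]
    simp only [dif_pos hc]
    congr 1
    have hk := k.isLt
    exact Fin.ext ((by omega : d - 1 - (m + (d - 1 - (k : ℕ)) - m) = (k : ℕ)) : _)
  calc ∑ j : Fin (d+m+1), g j
      = ∑ j ∈ Finset.univ.image e, g j := by
        symm
        apply Finset.sum_subset (Finset.subset_univ _)
        intro j _ hj
        rw [hg]
        dsimp only
        rw [dif_neg]
        intro hc
        apply hj
        refine Finset.mem_image.2 ⟨⟨d - 1 - ((j : ℕ) - m), by omega⟩, Finset.mem_univ _, ?_⟩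
        exact Fin.ext (by show m + (d - 1 - (d - 1 - ((j:ℕ) - m))) = (j:ℕ); omega)
    _ = ∑ k, g (e k) := by
        apply Finset.sum_image
        intro a _ b _ hab
        have : m + (d - 1 - (a : ℕ)) = m + (d - 1 - (b : ℕ)) := congrArg Fin.val hab
        have ha := a.isLt; have hb := b.isLt
        exact Fin.ext (by omega)
    _ = ∑ k, f k := Finset.sum_congr rfl (fun k _ => hek k)


lemma euclNorm_le {k : ℕ} (v : Fin k → ℝ) (C : ℝ) (hC : 0 ≤ C) (h : ∀ i, |v i| ≤ C) :
    euclNorm v ≤ Real.sqrt k * C := by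
  rw [euclNorm, ← Real.sqrt_sq hC, ← Real.sqrt_mul (by positivity)]
  apply Real.sqrt_le_sqrt
  calc ∑ i, v i ^ 2 ≤ ∑ _i : Fin k, C ^ 2 := by
        apply Finset.sum_le_sum
        intro i _
        have h1 := h i
        nlinarith [abs_nonneg (v i), sq_abs (v i)]
    _ = k * C ^ 2 := by simp [Finset.sum_const, nsmul_eq_mul]


theorem norm_gt_Z_U_pq (d m : ℕ) (hd : 0 < d) (hm : 0 < m)
    (y : Fin (d + m) → ℝ) (Θ : Matrix (Fin m) (Fin d) ℝ) (ε t : ℝ)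
    (hε0 : 0 < ε) (hε1 : ε < 1) (ht : 0 < t)
    (p : Fin (d + m) → ℤ) (q : ℤ) (hq0 : 0 < q) (hq : (q : ℝ) < Real.exp t)
    (happ : ∀ i, |y i - (p i : ℝ) / (q : ℝ)| < ε / Real.exp t) :
    euclNorm ((gmat (d + m) ε t * Zmat d m Θ * Umat (d + m) y).mulVec
        (pqVec (d + m) p q)) ≤
      (Real.sqrt ((d : ℝ) + m + 1) *
        Finset.univ.sup' ⟨(⟨0, hm⟩ : Fin m), Finset.mem_univ _⟩
          (fun i : Fin m => 1 + ∑ j, |Θ i j|)) * phiQ (d + m) ε t := by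
  classical
  have hexp : (0:ℝ) < Real.exp t := Real.exp_pos t
  have hq0' : (0:ℝ) < (q:ℝ) := by exact_mod_cast hq0
  have hφ : 0 < phiQ (d+m) ε t := Real.rpow_pos_of_pos (by positivity) _
  set M := Finset.univ.sup' ⟨(⟨0, hm⟩ : Fin m), Finset.mem_univ _⟩
      (fun i : Fin m => 1 + ∑ j, |Θ i j|) with hMdef
  have hMrow : ∀ r : Fin m, 1 + ∑ j, |Θ r j| ≤ M := by
    intro r; rw [hMdef]; exact Finset.le_sup' (fun i : Fin m => 1 + ∑ j, |Θ i j|) (Finset.mem_univ r)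
  have hM1 : (1:ℝ) ≤ M := le_trans (le_add_of_nonneg_right (by positivity)) (hMrow ⟨0, hm⟩)
  set v := pqVec (d+m) p q with hv
  set w := (Umat (d+m) y).mulVec v with hw
  have hvlast : v (Fin.last (d+m)) = (q:ℝ) := by
    rw [hv]; unfold pqVec; rw [dif_neg]; simp
  have hvi : ∀ i : Fin (d+m+1), (i:ℕ) < d+m →
      v i = -(p ⟨d+m-1-(i:ℕ), by omega⟩ : ℝ) := by
    intro i hi; rw [hv]; unfold pqVec; rw [dif_pos hi]
  have hwbound : ∀ i : Fin (d+m+1), (i:ℕ) < d + m → |w i| ≤ ε := by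
    intro i hi
    rw [hw, Umat_mulVec_lt _ _ _ _ hi, hvi i hi, hvlast]
    have key : -(p ⟨d+m-1-(i:ℕ), by omega⟩ : ℝ) + y ⟨d+m-1-(i:ℕ), by omega⟩ * (q:ℝ)
        = (q:ℝ) * (y ⟨d+m-1-(i:ℕ), by omega⟩ - (p ⟨d+m-1-(i:ℕ), by omega⟩ : ℝ)/(q:ℝ)) := by
      field_simp
      ring
    rw [key, abs_mul, abs_of_pos hq0']
    have h1 := (happ ⟨d+m-1-(i:ℕ), by omega⟩).le
    calc (q:ℝ) * |y ⟨d+m-1-(i:ℕ), by omega⟩ - (p ⟨d+m-1-(i:ℕ), by omega⟩ : ℝ)/(q:ℝ)|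
        ≤ (q:ℝ) * (ε / Real.exp t) := by
          apply mul_le_mul_of_nonneg_left _ hq0'.le
          exact h1
      _ ≤ Real.exp t * (ε / Real.exp t) := by
          apply mul_le_mul_of_nonneg_right hq.le (by positivity)
      _ = ε := by field_simp
  have hwlast : w (Fin.last (d+m)) = (q:ℝ) := by
    rw [hw, Umat_mulVec_ge, hvlast]
    simp
  set z := (Zmat d m Θ).mulVec w with hz
  have hzlast : z (Fin.last (d+m)) = (q:ℝ) := by
    rw [hz, Zmat_mulVec_ge, hwlast]
    simp
  have hzbound : ∀ i : Fin (d+m+1), (i:ℕ) < d + m → |z i| ≤ ε * M := by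
    intro i hi
    by_cases him : (i:ℕ) < m
    · rw [hz, Zmat_mulVec_lt _ _ _ _ _ him]
      have hrow : ∀ j : Fin (d+m+1),
          |(if h : m ≤ (j : ℕ) ∧ (j : ℕ) < d + m then
            Θ ⟨m - 1 - (i : ℕ), by omega⟩ ⟨d - 1 - ((j : ℕ) - m), by omega⟩ * w j else 0)|
          ≤ (if h : m ≤ (j : ℕ) ∧ (j : ℕ) < d + m then
            |Θ ⟨m - 1 - (i : ℕ), by omega⟩ ⟨d - 1 - ((j : ℕ) - m), by omega⟩| * ε else 0) := by
        intro j
        by_cases hc : m ≤ (j : ℕ) ∧ (j : ℕ) < d + m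
        · rw [dif_pos hc, dif_pos hc, abs_mul]
          exact mul_le_mul_of_nonneg_left (hwbound j hc.2) (abs_nonneg _)
        · rw [dif_neg hc, dif_neg hc, abs_zero]
      have hsum : (∑ j : Fin (d+m+1), (if h : m ≤ (j : ℕ) ∧ (j : ℕ) < d + m then
            |Θ ⟨m - 1 - (i : ℕ), by omega⟩ ⟨d - 1 - ((j : ℕ) - m), by omega⟩| * ε else 0))
          = (∑ k, |Θ ⟨m - 1 - (i : ℕ), by omega⟩ k|) * ε := by
        rw [sum_reindex d m (fun k => |Θ ⟨m - 1 - (i : ℕ), by omega⟩ k| * ε), Finset.sum_mul]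
      calc |w i + ∑ j : Fin (d+m+1), (if h : m ≤ (j : ℕ) ∧ (j : ℕ) < d + m then
            Θ ⟨m - 1 - (i : ℕ), by omega⟩ ⟨d - 1 - ((j : ℕ) - m), by omega⟩ * w j else 0)|
          ≤ |w i| + |∑ j : Fin (d+m+1), (if h : m ≤ (j : ℕ) ∧ (j : ℕ) < d + m then
            Θ ⟨m - 1 - (i : ℕ), by omega⟩ ⟨d - 1 - ((j : ℕ) - m), by omega⟩ * w j else 0)| :=
            abs_add_le _ _
        _ ≤ ε + (∑ k, |Θ ⟨m - 1 - (i : ℕ), by omega⟩ k|) * ε := by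
            apply add_le_add (hwbound i hi)
            calc _ ≤ _ := Finset.abs_sum_le_sum_abs _ _
              _ ≤ _ := Finset.sum_le_sum (fun j _ => hrow j)
              _ = _ := hsum
        _ = ε * (1 + ∑ k, |Θ ⟨m - 1 - (i : ℕ), by omega⟩ k|) := by ring
        _ ≤ ε * M := mul_le_mul_of_nonneg_left (hMrow _) hε0.le
    · rw [hz, Zmat_mulVec_ge _ _ _ _ _ him]
      calc |w i| ≤ ε := hwbound i hi
        _ ≤ ε * M := le_mul_of_one_le_right hε0.le hM1
  -- final vector
  rw [← Matrix.mulVec_mulVec, ← Matrix.mulVec_mulVec, ← hw, ← hz]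
  have hgd : ∀ i : Fin (d+m+1), (gmat (d+m) ε t).mulVec z i =
      (if (i:ℕ) < d+m then phiQ (d+m) ε t / ε else phiQ (d+m) ε t * Real.exp (-t)) * z i :=
    fun i => Matrix.mulVec_diagonal _ _ _
  have hC : (0:ℝ) ≤ M * phiQ (d+m) ε t := by positivity
  have hFb : ∀ i : Fin (d+m+1), |(gmat (d+m) ε t).mulVec z i| ≤ M * phiQ (d+m) ε t := by
    intro i
    rw [hgd i]
    by_cases hi : (i:ℕ) < d+m
    · rw [if_pos hi, abs_mul, abs_of_pos (by positivity : (0:ℝ) < phiQ (d+m) ε t / ε)]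
      calc phiQ (d+m) ε t / ε * |z i| ≤ phiQ (d+m) ε t / ε * (ε * M) :=
            mul_le_mul_of_nonneg_left (hzbound i hi) (by positivity)
        _ = M * phiQ (d+m) ε t := by field_simp
    · have hil : i = Fin.last (d+m) := Fin.ext (by have := i.isLt; simp; omega)
      rw [if_neg hi, hil, hzlast, abs_mul, abs_of_pos (by positivity),
        abs_of_pos hq0']
      have hexpneg : Real.exp (-t) = (Real.exp t)⁻¹ := Real.exp_neg t
      rw [hexpneg]
      calc phiQ (d+m) ε t * (Real.exp t)⁻¹ * (q:ℝ)
          ≤ phiQ (d+m) ε t * (Real.exp t)⁻¹ * Real.exp t := by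
            apply mul_le_mul_of_nonneg_left hq.le (by positivity)
        _ = phiQ (d+m) ε t := by field_simp
        _ ≤ M * phiQ (d+m) ε t := le_mul_of_one_le_left hφ.le hM1
  calc euclNorm ((gmat (d+m) ε t).mulVec z)
      ≤ Real.sqrt ((d+m+1 : ℕ)) * (M * phiQ (d+m) ε t) := euclNorm_le _ _ hC hFb
    _ = (Real.sqrt ((d : ℝ) + m + 1) * M) * phiQ (d+m) ε t := by
        push_cast
        ring
end
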